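/- Insertion lemma: let T be a finite task set, p ≥ 2 an integer, and π' : ℕ → Option T a schedule. Define a schedule π : ℕ → Option (T ⊕ Unit) on the extended task set by π(t) = some (inr ()) if p divides t, and π(t) = Option.map inl (π'(t − t/p − 1)) otherwise (integer division). Then: (a) the new task inr () occurs in π exactly at the multiples of p, so it is scheduled exactly every p slots; and (b) for every task i ∈ T and every integer K with K − ⌈K/p⌉ ≥ 1, if π' schedules i in every window of K − ⌈K/p⌉ consecutive slots, then π schedules inl i in every window of K consecutive slots. -/
import Mathlib



lemma aux_g (m s : ℕ) :
    ¬ (m+2) ∣ (s + s/(m+1) + 1) ∧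
    (s + s/(m+1) + 1) - (s + s/(m+1) + 1)/(m+2) - 1 = s := by
  obtain ⟨q, r, hr, hs⟩ : ∃ q r, r < m+1 ∧ (m+1)*q + r = s :=
    ⟨s/(m+1), s % (m+1), Nat.mod_lt _ (by omega), Nat.div_add_mod _ _⟩
  have hq : s/(m+1) = q := by
    rw [← hs, Nat.mul_add_div (by omega), Nat.div_eq_of_lt hr, Nat.add_zero]
  have hring : (m+2)*q = (m+1)*q + q := by ring
  have hgeq : s + s/(m+1) + 1 = (m+2)*q + (r+1) := by omega
  constructor
  · rw [hgeq, Nat.dvd_iff_mod_eq_zero, Nat.mul_add_mod, Nat.mod_eq_of_lt (by omega)]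
    omega
  · rw [hgeq, Nat.mul_add_div (by omega), Nat.div_eq_of_lt (by omega), Nat.add_zero]
    omega

lemma aux_fmono (p : ℕ) (hp : 0 < p) {a b : ℕ} (hab : a ≤ b) :
    a - a/p - 1 ≤ b - b/p - 1 := by
  have h1 : b/p ≤ a/p + (b-a) := by
    have e1 : b ≤ a + (b-a)*p := by
      have : b - a ≤ (b-a)*p := Nat.le_mul_of_pos_right _ hp
      omega
    have := Nat.div_le_div_right (c := p) e1
    rwa [Nat.add_mul_div_right _ _ hp] at this
  have h2 : a/p ≤ a := Nat.div_le_self _ _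
  omega

lemma aux_count (m : ℕ) {u x : ℕ} (hu : ¬ (m+2) ∣ u) (hxu : x ≤ u) :
    x - (x + (m+2) - 1)/(m+2) ≤ u - u/(m+2) - 1 := by
  obtain ⟨q, r, hr, hx⟩ : ∃ q r, r < m+2 ∧ (m+2)*q + r = x :=
    ⟨x/(m+2), x % (m+2), Nat.mod_lt _ (by omega), Nat.div_add_mod _ _⟩
  have hring : (m+2)*(q+1) = (m+2)*q + (m+2) := by ring
  rcases Nat.eq_zero_or_pos r with hr0 | hr1
  · have hceil : (x + (m+2) - 1)/(m+2) = q := by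
      have e : x + (m+2) - 1 = (m+2)*q + (m+1) := by omega
      rw [e, Nat.mul_add_div (by omega), Nat.div_eq_of_lt (by omega), Nat.add_zero]
    have hux : x + 1 ≤ u := by
      rcases Nat.lt_or_ge x u with h | h
      · omega
      · exfalso; apply hu; have : u = x := by omega
        rw [this, ← hx, hr0]; exact ⟨q, by ring⟩
    have hmono := aux_fmono (m+2) (by omega) hux
    have hx1 : (x+1)/(m+2) = q := by
      have e : x + 1 = (m+2)*q + 1 := by omega
      rw [e, Nat.mul_add_div (by omega), Nat.div_eq_of_lt (by omega), Nat.add_zero]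
    rw [hx1] at hmono
    omega
  · have hceil : (x + (m+2) - 1)/(m+2) = q + 1 := by
      have e : x + (m+2) - 1 = (m+2)*(q+1) + (r-1) := by omega
      rw [e, Nat.mul_add_div (by omega), Nat.div_eq_of_lt (by omega), Nat.add_zero]
    have hmono := aux_fmono (m+2) (by omega) hxu
    have hxq : x/(m+2) = q := by
      rw [← hx, Nat.mul_add_div (by omega), Nat.div_eq_of_lt hr, Nat.add_zero]
    rw [hxq] at hmono
    omega

lemma aux_glow (m t : ℕ) :
    t ≤ (t - (t + (m+2) - 1)/(m+2)) + (t - (t + (m+2) - 1)/(m+2))/(m+1) + 1 := by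
  obtain ⟨q, r, hr, hx⟩ : ∃ q r, r < m+2 ∧ (m+2)*q + r = t :=
    ⟨t/(m+2), t % (m+2), Nat.mod_lt _ (by omega), Nat.div_add_mod _ _⟩
  have hring : (m+2)*(q+1) = (m+2)*q + (m+2) := by ring
  have hring2 : (m+2)*q = (m+1)*q + q := by ring
  rcases Nat.eq_zero_or_pos r with hr0 | hr1
  · have hceil : (t + (m+2) - 1)/(m+2) = q := by
      have e : t + (m+2) - 1 = (m+2)*q + (m+1) := by omega
      rw [e, Nat.mul_add_div (by omega), Nat.div_eq_of_lt (by omega), Nat.add_zero]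
    have hN : t - (t + (m+2) - 1)/(m+2) = (m+1)*q + 0 := by omega
    rw [hceil] at hN ⊢
    rw [hN, Nat.mul_add_div (by omega), Nat.div_eq_of_lt (by omega), Nat.add_zero]
    omega
  · have hceil : (t + (m+2) - 1)/(m+2) = q + 1 := by
      have e : t + (m+2) - 1 = (m+2)*(q+1) + (r-1) := by omega
      rw [e, Nat.mul_add_div (by omega), Nat.div_eq_of_lt (by omega), Nat.add_zero]
    have hN : t - (t + (m+2) - 1)/(m+2) = (m+1)*q + (r-1) := by omega
    rw [hceil] at hN ⊢
    rw [hN, Nat.mul_add_div (by omega), Nat.div_eq_of_lt (by omega), Nat.add_zero]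
    omega

-- g monotone
lemma aux_gmono (m : ℕ) {a b : ℕ} (hab : a ≤ b) :
    a + a/(m+1) + 1 ≤ b + b/(m+1) + 1 := by
  have := Nat.div_le_div_right (c := m+1) hab
  omega

/-- Insertion lemma: let `T` be a finite task set, `p ≥ 2`, and
`π' : ℕ → Option T` a schedule.  Define `π : ℕ → Option (T ⊕ Unit)` by
`π t = some (inr ())` if `p ∣ t` and `π t = Option.map inl (π' (t - t/p - 1))`
otherwise.  Then (a) the new task `inr ()` occurs in `π` exactly at the multiples
of `p`, and (b) for every task `i` and every `K` with `K - ⌈K/p⌉ ≥ 1`, if `π'`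
schedules `i` in every window of `K - ⌈K/p⌉` consecutive slots, then `π` schedules
`inl i` in every window of `K` consecutive slots. -/
theorem insertion_lemma {T : Type} [Fintype T] (p : ℕ) (hp : 2 ≤ p)
    (π' : ℕ → Option T)
    (π : ℕ → Option (T ⊕ Unit))
    (hπ : ∀ t : ℕ, π t = if p ∣ t then some (Sum.inr ())
      else Option.map Sum.inl (π' (t - t / p - 1))) :
    (∀ t : ℕ, π t = some (Sum.inr ()) ↔ p ∣ t) ∧
    (∀ (i : T) (K cK : ℕ), (cK : ℤ) = ⌈(K : ℚ) / (p : ℚ)⌉ → 1 ≤ K - cK →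
      (∀ t : ℕ, ∃ s, t ≤ s ∧ s < t + (K - cK) ∧ π' s = some i) →
      (∀ t : ℕ, ∃ s, t ≤ s ∧ s < t + K ∧ π s = some (Sum.inl i))) := by
  obtain ⟨m, rfl⟩ : ∃ m, p = m + 2 := ⟨p - 2, by omega⟩
  constructor
  · intro t
    constructor
    · intro h
      by_contra hd
      rw [hπ, if_neg hd] at h
      cases h' : π' (t - t / (m+2) - 1) <;> rw [h'] at h <;> simp at h
    · intro hd
      rw [hπ, if_pos hd]
  · intro i K cK hcK hW hsch t
    have hp0 : (0:ℚ) < ((m:ℚ)+2) := by positivity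
    have hcast : ((m+2:ℕ):ℚ) = (m:ℚ)+2 := by push_cast; ring
    have h1 : (K:ℚ) / ((m:ℚ)+2) ≤ (cK:ℚ) := by
      have h := Int.le_ceil ((K:ℚ) / (((m+2:ℕ)):ℚ))
      rw [← hcK, hcast] at h
      exact_mod_cast h
    have h2 : (cK:ℚ) < (K:ℚ) / ((m:ℚ)+2) + 1 := by
      have h := Int.ceil_lt_add_one ((K:ℚ) / (((m+2:ℕ)):ℚ))
      rw [← hcK, hcast] at h
      exact_mod_cast h
    have hb1 : K ≤ cK * (m+2) := by
      have h := (div_le_iff₀ hp0).mp h1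
      have : (K:ℚ) ≤ ((cK * (m+2) : ℕ) : ℚ) := by push_cast; linarith
      exact_mod_cast this
    have hb2 : cK * (m+2) < K + (m+2) := by
      have h3 := mul_lt_mul_of_pos_right h2 hp0
      rw [add_mul, div_mul_cancel₀ _ (ne_of_gt hp0), one_mul] at h3
      have : ((cK * (m+2) : ℕ) : ℚ) < ((K + (m+2) : ℕ) : ℚ) := by push_cast; linarith
      exact_mod_cast this
    set tq := (t + (m+2) - 1)/(m+2) with htqdef
    clear_value tq
    have htq_mod := Nat.div_add_mod (t + (m+2) - 1) (m+2)
    rw [← htqdef] at htq_mod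
    have htq_modlt : (t + (m+2) - 1) % (m+2) < m+2 := Nat.mod_lt _ (by omega)
    have htlow : t ≤ (m+2)*tq := by omega
    have htq_le : tq ≤ t := by
      have htm : t ≤ t*(m+2) := Nat.le_mul_of_pos_right _ (by omega)
      have e1 : t + (m+2) - 1 ≤ (m+2)*t + (m+1) := by
        have : (m+2)*t = t*(m+2) := by ring
        omega
      have hr : ((m+2)*t + (m+1))/(m+2) = t := by
        rw [Nat.mul_add_div (by omega), Nat.div_eq_of_lt (by omega), Nat.add_zero]
      have h := Nat.div_le_div_right (c := m+2) e1
      rw [hr, ← htqdef] at h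
      omega
    -- uq bound
    set uq := (t + K + (m+2) - 1)/(m+2) with huqdef
    clear_value uq
    have huq_le : uq ≤ tq + cK := by
      have e1 : t + K + (m+2) - 1 ≤ (m+2)*(tq + cK) + (m+1) := by
        have hr1 : (m+2)*(tq+cK) = (m+2)*tq + cK*(m+2) := by ring
        omega
      have hr : ((m+2)*(tq+cK) + (m+1))/(m+2) = tq + cK := by
        rw [Nat.mul_add_div (by omega), Nat.div_eq_of_lt (by omega), Nat.add_zero]
      have h := Nat.div_le_div_right (c := m+2) e1
      rw [hr, ← huqdef] at h
      omega
    have hcKK : cK < K := by omega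
    -- apply schedule hypothesis at tn := t - tq
    obtain ⟨s', hs1, hs2, hs3⟩ := hsch (t - tq)
    obtain ⟨hnd, hfg⟩ := aux_g m s'
    set s := s' + s'/(m+1) + 1 with hsdef
    clear_value s
    refine ⟨s, ?_, ?_, ?_⟩
    · have hgm := aux_gmono m hs1
      have hgl := aux_glow m t
      rw [← htqdef] at hgl
      omega
    · by_contra hge
      push_neg at hge
      have hcnt := aux_count m hnd hge
      rw [hfg] at hcnt
      -- hcnt : (t+K) - uq ≤ s', but s' < (t - tq) + (K - cK) ≤ (t+K) - uq
      have e : t + K + (m+2) - 1 = (t + K) + (m+2) - 1 := by omega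
      rw [← e, ← huqdef] at hcnt
      omega
    · rw [hπ, if_neg hnd, hfg, hs3]
      rfl
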